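/- (Ruiz's lower bound for the Coulomb energy) For every alpha > 1/2 there exists c = c(alpha) > 0 such that for any measurable function phi : R^3 → R, ∫∫_{R^3 × R^3} |phi(x)|^2 |phi(y)|^2 / |x-y| dx dy ≥ c ( ∫_{R^3} |phi(x)|^2 / ( |x|^{1/2} (1 + |log|x||)^alpha ) dx )^2. -/

import Mathlib

open MeasureTheory Real Set ENNReal Filter
noncomputable section
abbrev E3 := EuclideanSpace ℝ (Fin 3)

/-- Coulomb energy `∫∫ |φ(x)|²|φ(y)|²/|x-y| dx dy` on `ℝ³`, valued in `[0,∞]`. -/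
def coulomb (φ : E3 → ℝ) : ℝ≥0∞ :=
  ∫⁻ x, ∫⁻ y, ENNReal.ofReal (φ x ^ 2 * φ y ^ 2 / ‖x - y‖)

/-- Squared homogeneous Sobolev seminorm `∫ |ξ|^{2s} |𝓕φ(ξ)|² dξ`, valued in `[0,∞]`. -/
def sobolevSq (s : ℝ) (φ : E3 → ℝ) : ℝ≥0∞ :=
  ∫⁻ ξ : E3, ENNReal.ofReal (‖ξ‖ ^ (2 * s) * ‖FourierTransform.fourier (fun x : E3 => (φ x : ℂ)) ξ‖ ^ 2)

/-- A function on `ℝ³` is radial if it depends only on the norm. -/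
def IsRadial (φ : E3 → ℝ) : Prop := ∀ x y : E3, ‖x‖ = ‖y‖ → φ x = φ y

namespace Ruiz

lemma ennreal_cs (u v : ℤ → ℝ≥0∞) :
    (∑' n, u n * v n) ^ 2 ≤ (∑' n, u n ^ 2) * (∑' n, v n ^ 2) := by
  have hpq : Real.HolderConjugate 2 2 := by rw [Real.holderConjugate_iff]; norm_num
  have h := ENNReal.lintegral_mul_le_Lp_mul_Lq (Measure.count : Measure ℤ) hpq
    (Measurable.of_discrete (f := u)).aemeasurable
    (Measurable.of_discrete (f := v)).aemeasurable
  simp only [Pi.mul_apply, lintegral_count] at h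
  have h2 : ∀ w : ℤ → ℝ≥0∞, (∑' n, w n ^ (2:ℝ)) = ∑' n, w n ^ 2 := by
    intro w
    congr 1; funext n; rw [← ENNReal.rpow_natCast (w n) 2]; norm_num
  rw [h2, h2] at h
  calc (∑' n, u n * v n) ^ 2
      ≤ ((∑' n, u n ^ 2) ^ (1/(2:ℝ)) * (∑' n, v n ^ 2) ^ (1/(2:ℝ))) ^ 2 :=
        pow_le_pow_left' h 2
    _ = (∑' n, u n ^ 2) * (∑' n, v n ^ 2) := by
        rw [mul_pow, ← ENNReal.rpow_natCast (_ ^ (1/(2:ℝ))) 2,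
          ← ENNReal.rpow_natCast (_ ^ (1/(2:ℝ))) 2, ← ENNReal.rpow_mul, ← ENNReal.rpow_mul]
        norm_num

def Ann (n : ℤ) : Set E3 := {x | ‖x‖ ∈ Ico (Real.exp n) (Real.exp (n+1))}

lemma measurableSet_Ann (n : ℤ) : MeasurableSet (Ann n) := measurable_norm measurableSet_Ico

lemma Ann_unique {x : E3} {n m : ℤ} (hn : x ∈ Ann n) (hm : x ∈ Ann m) : n = m := by
  by_contra h
  rcases hn with ⟨hn1, hn2⟩; rcases hm with ⟨hm1, hm2⟩
  rcases lt_or_gt_of_ne h with hlt | hlt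
  · have : (n:ℝ) + 1 ≤ m := by exact_mod_cast Int.add_one_le_iff.mpr hlt
    exact absurd (hn2.trans_le ((Real.exp_le_exp.mpr this).trans hm1)) (lt_irrefl _)
  · have : (m:ℝ) + 1 ≤ n := by exact_mod_cast Int.add_one_le_iff.mpr hlt
    exact absurd (hm2.trans_le ((Real.exp_le_exp.mpr this).trans hn1)) (lt_irrefl _)

lemma mem_Ann_of_ne_zero {x : E3} (hx : x ≠ 0) : x ∈ Ann ⌊Real.log ‖x‖⌋ := by
  have h0 : 0 < ‖x‖ := norm_pos_iff.mpr hx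
  constructor
  · calc Real.exp ⌊Real.log ‖x‖⌋ ≤ Real.exp (Real.log ‖x‖) :=
        Real.exp_le_exp.mpr (Int.floor_le _)
      _ = ‖x‖ := Real.exp_log h0
  · calc ‖x‖ = Real.exp (Real.log ‖x‖) := (Real.exp_log h0).symm
      _ < Real.exp (⌊Real.log ‖x‖⌋ + 1) :=
        Real.exp_lt_exp.mpr (by push_cast; exact Int.lt_floor_add_one _)

def mR (n : ℤ) : ℝ := if 0 ≤ n then n else -(n+1)

lemma mR_nonneg (n : ℤ) : 0 ≤ mR n := by
  unfold mR; split_ifs with h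
  · exact_mod_cast h
  · push_neg at h
    have : ((n:ℝ) + 1) ≤ 0 := by exact_mod_cast (by omega : n + 1 ≤ 0)
    linarith

def Wn (α : ℝ) (n : ℤ) : ℝ := Real.exp (-((n:ℝ)/2)) * (1 + mR n) ^ (-α)

lemma Wn_nonneg (α : ℝ) (n : ℤ) : 0 ≤ Wn α n :=
  mul_nonneg (Real.exp_pos _).le (Real.rpow_nonneg (by linarith [mR_nonneg n]) _)

lemma weight_bound (α : ℝ) (hα : 0 ≤ α) {x : E3} {n : ℤ} (hx : x ∈ Ann n) (t : ℝ) :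
    t ^ 2 / (‖x‖ ^ ((1:ℝ)/2) * (1 + |Real.log ‖x‖|) ^ α) ≤ Wn α n * t ^ 2 := by
  obtain ⟨h1, h2⟩ := hx
  have hxpos : (0:ℝ) < ‖x‖ := lt_of_lt_of_le (Real.exp_pos _) h1
  have hlog1 : (n:ℝ) ≤ Real.log ‖x‖ := by
    rw [← Real.log_exp (n:ℝ)]; exact Real.log_le_log (Real.exp_pos _) h1
  have hlog2 : Real.log ‖x‖ < (n:ℝ) + 1 := by
    rw [← Real.log_exp ((n:ℝ)+1)]; exact Real.log_lt_log hxpos h2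
  have hmR : mR n ≤ |Real.log ‖x‖| := by
    unfold mR; split_ifs with h
    · have : (0:ℝ) ≤ n := by exact_mod_cast h
      rw [abs_of_nonneg (le_trans this hlog1)]; exact hlog1
    · push_neg at h
      have hn1 : ((n:ℝ) + 1) ≤ 0 := by exact_mod_cast (by omega : n + 1 ≤ 0)
      rw [abs_of_nonpos (le_of_lt (lt_of_lt_of_le hlog2 hn1))]
      linarith
  have hd1 : Real.exp ((n:ℝ)/2) ≤ ‖x‖ ^ ((1:ℝ)/2) := by
    calc Real.exp ((n:ℝ)/2) = Real.exp ((n:ℝ) * (1/2)) := by ring_nf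
      _ = Real.exp (n:ℝ) ^ ((1:ℝ)/2) := Real.exp_mul _ _
      _ ≤ ‖x‖ ^ ((1:ℝ)/2) := Real.rpow_le_rpow (Real.exp_pos _).le h1 (by norm_num)
  have hd2 : (1 + mR n) ^ α ≤ (1 + |Real.log ‖x‖|) ^ α :=
    Real.rpow_le_rpow (by linarith [mR_nonneg n]) (by linarith) hα
  have hd0pos : 0 < Real.exp ((n:ℝ)/2) * (1 + mR n) ^ α :=
    mul_pos (Real.exp_pos _) (Real.rpow_pos_of_pos (by linarith [mR_nonneg n]) _)
  have hd : Real.exp ((n:ℝ)/2) * (1 + mR n) ^ α ≤ ‖x‖ ^ ((1:ℝ)/2) * (1 + |Real.log ‖x‖|) ^ α :=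
    mul_le_mul hd1 hd2 (Real.rpow_nonneg (by linarith [mR_nonneg n]) _) (Real.rpow_nonneg hxpos.le _)
  calc t ^ 2 / (‖x‖ ^ ((1:ℝ)/2) * (1 + |Real.log ‖x‖|) ^ α)
      ≤ t ^ 2 / (Real.exp ((n:ℝ)/2) * (1 + mR n) ^ α) :=
        div_le_div_of_nonneg_left (sq_nonneg t) hd0pos hd
    _ = Wn α n * t ^ 2 := by
        unfold Wn
        rw [div_eq_mul_inv, mul_inv, ← Real.exp_neg, ← Real.rpow_neg (by linarith [mR_nonneg n])]
        ring_nf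

lemma WnC_sq (α : ℝ) (n : ℤ) :
    (Wn α n * Real.sqrt (2 * Real.exp ((n:ℝ)+1))) ^ 2
      = 2 * Real.exp 1 * (1 + mR n) ^ (-(2*α)) := by
  have hbase : (0:ℝ) < 1 + mR n := by linarith [mR_nonneg n]
  rw [mul_pow, Real.sq_sqrt (by positivity)]
  unfold Wn
  rw [mul_pow, sq (Real.exp _), ← Real.exp_add, sq ((1 + mR n) ^ (-α)),
    ← Real.rpow_add hbase,
    show -((n:ℝ)/2) + -((n:ℝ)/2) = -(n:ℝ) by ring,
    show -α + -α = -(2*α) by ring]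
  calc Real.exp (-(n:ℝ)) * (1 + mR n) ^ (-(2*α)) * (2 * Real.exp ((n:ℝ)+1))
      = (Real.exp (-(n:ℝ)) * Real.exp ((n:ℝ)+1)) * (2 * (1 + mR n) ^ (-(2*α))) := by ring
    _ = 2 * Real.exp 1 * (1 + mR n) ^ (-(2*α)) := by
        rw [← Real.exp_add, show -(n:ℝ) + ((n:ℝ)+1) = 1 by ring]; ring

lemma S_ne_top (α : ℝ) (hα : 1/2 < α) :
    (∑' n : ℤ, ENNReal.ofReal (2 * Real.exp 1 * (1 + mR n) ^ (-(2*α)))) ≠ ∞ := by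
  have h2α : (1:ℝ) < 2*α := by linarith
  set G : ℤ → ℝ := fun n => |(n:ℝ)| ^ (-(2*α)) + if n = 0 then 1 else 0 with hG
  have hGnonneg : ∀ n, 0 ≤ G n := fun n =>
    add_nonneg (Real.rpow_nonneg (abs_nonneg _) _) (by positivity)
  have hGsum : Summable G :=
    (summable_abs_int_rpow h2α).add
      (summable_of_ne_finset_zero (s := {0}) (fun n hn => if_neg (by simpa using hn)))
  have hle : ∀ n : ℤ, 2 * Real.exp 1 * (1 + mR n) ^ (-(2*α)) ≤ 2 * Real.exp 1 * G n := by
    intro n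
    apply mul_le_mul_of_nonneg_left _ (by positivity)
    by_cases hn : n = 0
    · subst hn
      simp only [hG, if_pos rfl]
      have : mR 0 = 0 := by simp [mR]
      rw [this, add_zero, Real.one_rpow]
      have h0 : |((0:ℤ):ℝ)| ^ (-(2*α)) = 0 := by
        rw [show |((0:ℤ):ℝ)| = 0 by simp, Real.zero_rpow (by linarith)]
      simp [h0]
      positivity
    · have habs : |(n:ℝ)| ≤ 1 + mR n := by
        unfold mR; split_ifs with h
        · rw [abs_of_nonneg (by exact_mod_cast h)]; linarith
        · push_neg at h
          rw [abs_of_nonpos (by exact_mod_cast h.le)]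
          linarith
      have habspos : (0:ℝ) < |(n:ℝ)| := by
        simp only [abs_pos, ne_eq, Int.cast_eq_zero]; exact hn
      have := Real.rpow_le_rpow_of_nonpos habspos habs (by linarith : -(2*α) ≤ 0)
      simp only [hG, if_neg hn, add_zero]
      exact this
  refine ne_top_of_le_ne_top (@ENNReal.ofReal_ne_top (∑' n : ℤ, 2 * Real.exp 1 * G n)) ?_
  calc (∑' n : ℤ, ENNReal.ofReal (2 * Real.exp 1 * (1 + mR n) ^ (-(2*α))))
      ≤ ∑' n : ℤ, ENNReal.ofReal (2 * Real.exp 1 * G n) :=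
        ENNReal.tsum_le_tsum (fun n => ENNReal.ofReal_le_ofReal (hle n))
    _ = ENNReal.ofReal (∑' n : ℤ, 2 * Real.exp 1 * G n) :=
        (ENNReal.ofReal_tsum_of_nonneg (fun n => by positivity) (hGsum.mul_left _)).symm

end Ruiz

open Ruiz in
theorem ruiz_coulomb_lower_bound (α : ℝ) (hα : 1/2 < α) :
    ∃ c : ℝ, 0 < c ∧ ∀ φ : E3 → ℝ, Measurable φ →
      ENNReal.ofReal c *
        (∫⁻ x : E3, ENNReal.ofReal
          (φ x ^ 2 / (‖x‖ ^ ((1:ℝ)/2) * (1 + |Real.log ‖x‖|) ^ α))) ^ 2 ≤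
      coulomb φ := by
  have hα0 : (0:ℝ) ≤ α := by linarith
  set S : ℝ≥0∞ := ∑' n : ℤ, ENNReal.ofReal (2 * Real.exp 1 * (1 + mR n) ^ (-(2*α))) with hSdef
  have hStop : S ≠ ∞ := S_ne_top α hα
  have hS0 : S ≠ 0 := by
    intro h
    have h1 : ENNReal.ofReal (2 * Real.exp 1 * (1 + mR 0) ^ (-(2*α))) ≤ S :=
      ENNReal.le_tsum 0
    rw [h, le_zero_iff, ENNReal.ofReal_eq_zero] at h1
    have hb : (0:ℝ) < 1 + mR 0 := by linarith [mR_nonneg 0]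
    have : (0:ℝ) < 2 * Real.exp 1 * (1 + mR 0) ^ (-(2*α)) := by positivity
    linarith
  refine ⟨S.toReal⁻¹, inv_pos.mpr (ENNReal.toReal_pos hS0 hStop), ?_⟩
  intro φ hφ
  have hcS : ENNReal.ofReal S.toReal⁻¹ = S⁻¹ := by
    rw [ENNReal.ofReal_inv_of_pos (ENNReal.toReal_pos hS0 hStop),
      ENNReal.ofReal_toReal hStop]
  -- notation
  set f : E3 → ℝ≥0∞ := fun x => ENNReal.ofReal (φ x ^ 2) with hfdef
  have hf : Measurable f := (hφ.pow_const 2).ennreal_ofReal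
  set b : ℤ → ℝ≥0∞ := fun n => ∫⁻ x in Ann n, f x with hbdef
  set Cen : ℤ → ℝ≥0∞ := fun n => ENNReal.ofReal (2 * Real.exp ((n:ℝ)+1)) with hCdef
  have hCen0 : ∀ n, Cen n ≠ 0 := fun n => by
    simp only [hCdef, ne_eq, ENNReal.ofReal_eq_zero, not_le]; positivity
  have hCentop : ∀ n, Cen n ≠ ∞ := fun n => ENNReal.ofReal_ne_top
  -- kernel measurability
  have hFmeas : Measurable (fun p : E3 × E3 =>
      ENNReal.ofReal (φ p.1 ^ 2 * φ p.2 ^ 2 / ‖p.1 - p.2‖)) :=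
    ((((hφ.comp measurable_fst).pow_const 2).mul
      ((hφ.comp measurable_snd).pow_const 2)).div
      (measurable_fst.sub measurable_snd).norm).ennreal_ofReal
  have hinner_meas : ∀ n : ℤ, Measurable (fun x : E3 =>
      ∫⁻ y in Ann n, ENNReal.ofReal (φ x ^ 2 * φ y ^ 2 / ‖x - y‖)) := by
    intro n
    exact Measurable.lintegral_prod_right' (f := fun p : E3 × E3 =>
      ENNReal.ofReal (φ p.1 ^ 2 * φ p.2 ^ 2 / ‖p.1 - p.2‖)) hFmeas
  -- Step D : ∑' n, b n ^ 2 / Cen n ≤ coulomb φ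
  have hD : (∑' n : ℤ, b n ^ 2 / Cen n) ≤ coulomb φ := by
    have step1 : ∀ n : ℤ, b n ^ 2 / Cen n ≤
        ∫⁻ x in Ann n, ∫⁻ y in Ann n, ENNReal.ofReal (φ x ^ 2 * φ y ^ 2 / ‖x - y‖) := by
      intro n
      have inner : ∀ x ∈ Ann n, f x * (b n / Cen n) ≤
          ∫⁻ y in Ann n, ENNReal.ofReal (φ x ^ 2 * φ y ^ 2 / ‖x - y‖) := by
        intro x hx
        have hxlt : ‖x‖ < Real.exp ((n:ℝ)+1) := hx.2
        have hcalc : f x * (b n / Cen n) = ∫⁻ y in Ann n, f x / Cen n * f y := by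
          rw [lintegral_const_mul (f x / Cen n) hf]
          rw [div_eq_mul_inv, div_eq_mul_inv]; ring
        rw [hcalc]
        apply lintegral_mono_ae
        have hne : ∀ᵐ (y : E3) ∂(volume.restrict (Ann n)), y ≠ x := by
          apply ae_restrict_of_ae
          rw [ae_iff]
          have : {y : E3 | ¬ y ≠ x} = {x} := by ext y; simp
          rw [this]
          exact measure_singleton x
        filter_upwards [ae_restrict_mem (measurableSet_Ann n), hne] with y hy hyx
        have hylt : ‖y‖ < Real.exp ((n:ℝ)+1) := hy.2
        have hxypos : (0:ℝ) < ‖x - y‖ := by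
          rw [norm_pos_iff]; exact sub_ne_zero.mpr (Ne.symm hyx)
        have hxyle : ‖x - y‖ ≤ 2 * Real.exp ((n:ℝ)+1) := by
          calc ‖x - y‖ ≤ ‖x‖ + ‖y‖ := norm_sub_le _ _
            _ ≤ 2 * Real.exp ((n:ℝ)+1) := by linarith
        calc f x / Cen n * f y
            = ENNReal.ofReal (φ x ^ 2 * φ y ^ 2 / (2 * Real.exp ((n:ℝ)+1))) := by
              rw [ENNReal.ofReal_div_of_pos (by positivity), ENNReal.ofReal_mul (sq_nonneg _)]
              rw [div_eq_mul_inv, div_eq_mul_inv]; ring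
          _ ≤ ENNReal.ofReal (φ x ^ 2 * φ y ^ 2 / ‖x - y‖) :=
              ENNReal.ofReal_le_ofReal
                (div_le_div_of_nonneg_left (by positivity) hxypos hxyle)
      calc b n ^ 2 / Cen n = ∫⁻ x in Ann n, f x * (b n / Cen n) := by
            rw [lintegral_mul_const (b n / Cen n) hf, sq, mul_div_assoc]
        _ ≤ _ := setLIntegral_mono (hinner_meas n) inner
    refine le_trans (ENNReal.tsum_le_tsum step1) ?_
    have heq : ∀ n : ℤ, (∫⁻ x in Ann n,
        ∫⁻ y in Ann n, ENNReal.ofReal (φ x ^ 2 * φ y ^ 2 / ‖x - y‖))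
        = ∫⁻ x, (Ann n).indicator
            (fun x => ∫⁻ y in Ann n, ENNReal.ofReal (φ x ^ 2 * φ y ^ 2 / ‖x - y‖)) x := by
      intro n
      rw [lintegral_indicator (measurableSet_Ann n)]
    calc ∑' n : ℤ, (∫⁻ x in Ann n,
          ∫⁻ y in Ann n, ENNReal.ofReal (φ x ^ 2 * φ y ^ 2 / ‖x - y‖))
        = ∫⁻ x, ∑' n : ℤ, (Ann n).indicator
            (fun x => ∫⁻ y in Ann n, ENNReal.ofReal (φ x ^ 2 * φ y ^ 2 / ‖x - y‖)) x := by
          rw [lintegral_tsum (fun n =>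
            ((hinner_meas n).indicator (measurableSet_Ann n)).aemeasurable)]
          exact tsum_congr heq
      _ ≤ ∫⁻ x, ∫⁻ y, ENNReal.ofReal (φ x ^ 2 * φ y ^ 2 / ‖x - y‖) := by
          apply lintegral_mono
          intro x
          dsimp only
          by_cases hx : ∃ n, x ∈ Ann n
          · obtain ⟨n, hn⟩ := hx
            rw [tsum_eq_single n (fun m hm =>
              Set.indicator_of_notMem (fun hmem => hm (Ann_unique hmem hn)) _)]
            rw [Set.indicator_of_mem hn]
            exact setLIntegral_le_lintegral _ _
          · push_neg at hx
            simp only [Set.indicator_of_notMem (hx _)]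
            simp
      _ = coulomb φ := rfl
  -- Step I : the weighted integral is bounded by ∑' ofReal (Wn α n) * b n
  set I : ℝ≥0∞ := ∫⁻ x : E3, ENNReal.ofReal
      (φ x ^ 2 / (‖x‖ ^ ((1:ℝ)/2) * (1 + |Real.log ‖x‖|) ^ α)) with hIdef
  have hI : I ≤ ∑' n : ℤ, ENNReal.ofReal (Wn α n) * b n := by
    have hpt : ∀ x : E3, ENNReal.ofReal
        (φ x ^ 2 / (‖x‖ ^ ((1:ℝ)/2) * (1 + |Real.log ‖x‖|) ^ α))
        ≤ ∑' n : ℤ, (Ann n).indicator (fun x => ENNReal.ofReal (Wn α n) * f x) x := by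
      intro x
      by_cases hx : x = 0
      · subst hx
        simp only [norm_zero]
        rw [Real.zero_rpow (by norm_num : (1:ℝ)/2 ≠ 0), zero_mul, _root_.div_zero,
          ENNReal.ofReal_zero]
        exact zero_le
      · have hmem := mem_Ann_of_ne_zero hx
        calc ENNReal.ofReal (φ x ^ 2 / (‖x‖ ^ ((1:ℝ)/2) * (1 + |Real.log ‖x‖|) ^ α))
            ≤ ENNReal.ofReal (Wn α ⌊Real.log ‖x‖⌋ * φ x ^ 2) :=
              ENNReal.ofReal_le_ofReal (weight_bound α hα0 hmem (φ x))
          _ = ENNReal.ofReal (Wn α ⌊Real.log ‖x‖⌋) * f x :=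
              ENNReal.ofReal_mul (Wn_nonneg α _)
          _ = (Ann ⌊Real.log ‖x‖⌋).indicator
                (fun y => ENNReal.ofReal (Wn α ⌊Real.log ‖x‖⌋) * f y) x :=
              (Set.indicator_of_mem hmem
                (fun y => ENNReal.ofReal (Wn α ⌊Real.log ‖x‖⌋) * f y)).symm
          _ ≤ _ := ENNReal.le_tsum ⌊Real.log ‖x‖⌋
    calc I ≤ ∫⁻ x, ∑' n : ℤ, (Ann n).indicator
          (fun x => ENNReal.ofReal (Wn α n) * f x) x := lintegral_mono hpt
      _ = ∑' n : ℤ, ∫⁻ x, (Ann n).indicator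
          (fun x => ENNReal.ofReal (Wn α n) * f x) x :=
          lintegral_tsum (fun n =>
            ((hf.const_mul _).indicator (measurableSet_Ann n)).aemeasurable)
      _ = ∑' n : ℤ, ENNReal.ofReal (Wn α n) * b n := by
          apply tsum_congr; intro n
          rw [lintegral_indicator (measurableSet_Ann n),
            lintegral_const_mul _ hf]
  -- Cauchy-Schwarz step
  set sC : ℤ → ℝ := fun n => Real.sqrt (2 * Real.exp ((n:ℝ)+1)) with hsCdef
  have hsCpos : ∀ n, (0:ℝ) < sC n := fun n => Real.sqrt_pos.mpr (by positivity)
  have hsC0 : ∀ n, ENNReal.ofReal (sC n) ≠ 0 := fun n => by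
    simp only [ne_eq, ENNReal.ofReal_eq_zero, not_le]; exact hsCpos n
  have hsCtop : ∀ n, ENNReal.ofReal (sC n) ≠ ∞ := fun n => ENNReal.ofReal_ne_top
  have hsCsq : ∀ n, ENNReal.ofReal (sC n) ^ 2 = Cen n := by
    intro n
    rw [← ENNReal.ofReal_pow (hsCpos n).le, hsCdef]
    simp only []
    rw [Real.sq_sqrt (by positivity)]
  set u : ℤ → ℝ≥0∞ := fun n => ENNReal.ofReal (Wn α n * sC n) with hudef
  set v : ℤ → ℝ≥0∞ := fun n => b n / ENNReal.ofReal (sC n) with hvdef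
  have huv : ∀ n, u n * v n = ENNReal.ofReal (Wn α n) * b n := by
    intro n
    rw [hudef, hvdef]
    simp only []
    rw [ENNReal.ofReal_mul (Wn_nonneg α n), mul_assoc,
      ENNReal.mul_div_cancel (hsC0 n) (hsCtop n)]
  have hu2 : ∀ n, u n ^ 2 = ENNReal.ofReal (2 * Real.exp 1 * (1 + mR n) ^ (-(2*α))) := by
    intro n
    rw [hudef]
    simp only []
    rw [← ENNReal.ofReal_pow (mul_nonneg (Wn_nonneg α n) (hsCpos n).le), WnC_sq]
  have hv2 : ∀ n, v n ^ 2 = b n ^ 2 / Cen n := by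
    intro n
    rw [hvdef]
    simp only []
    rw [div_eq_mul_inv, mul_pow, ← ENNReal.inv_pow, hsCsq, ← div_eq_mul_inv]
  have hCS : (∑' n : ℤ, ENNReal.ofReal (Wn α n) * b n) ^ 2 ≤ S * (∑' n : ℤ, b n ^ 2 / Cen n) := by
    calc (∑' n : ℤ, ENNReal.ofReal (Wn α n) * b n) ^ 2
        = (∑' n : ℤ, u n * v n) ^ 2 := by rw [tsum_congr huv]
      _ ≤ (∑' n : ℤ, u n ^ 2) * (∑' n : ℤ, v n ^ 2) := ennreal_cs u v
      _ = S * (∑' n : ℤ, b n ^ 2 / Cen n) := by rw [tsum_congr hu2, tsum_congr hv2]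
  -- assembly
  calc ENNReal.ofReal S.toReal⁻¹ * I ^ 2
      ≤ S⁻¹ * (∑' n : ℤ, ENNReal.ofReal (Wn α n) * b n) ^ 2 := by
        rw [hcS]; exact mul_le_mul_right (pow_le_pow_left' hI 2) _
    _ ≤ S⁻¹ * (S * (∑' n : ℤ, b n ^ 2 / Cen n)) := mul_le_mul_right hCS _
    _ ≤ S⁻¹ * (S * coulomb φ) := mul_le_mul_right (mul_le_mul_right hD _) _
    _ = coulomb φ := by rw [← mul_assoc, ENNReal.inv_mul_cancel hS0 hStop, one_mul]
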